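/- Let n ≥ 2 and let A, B be invertible symmetric (n+1)×(n+1) complex matrices such that the pair {Q_A, Q_B} has normal crossings. If S is any symmetric (n+1)×(n+1) complex matrix such that xᵀSx = 0 for every x ∈ ℂ^{n+1} with xᵀAx = 0 and xᵀBx = 0, then S = αA + βB for some α, β ∈ ℂ; that is, every quadric containing the base locus Q_A ∩ Q_B lies in the pencil generated by Q_A and Q_B. -/

import Mathlib

open Matrix Module

lemma aux_quad_root (a b c : ℂ) (ha : a ≠ 0) : ∃ x : ℂ, a * (x * x) + b * x + c = 0 := by
  apply exists_quadratic_eq_zero ha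
  obtain ⟨z, hz⟩ := IsAlgClosed.exists_pow_nat_eq (k := ℂ) (discrim a b c) (n := 2) two_pos
  exact ⟨z, by rw [← hz]; ring⟩

lemma symm_dot {m : ℕ} (M : Matrix (Fin m) (Fin m) ℂ) (hM : M.IsSymm) (u v : Fin m → ℂ) :
    u ⬝ᵥ (M *ᵥ v) = v ⬝ᵥ (M *ᵥ u) := by
  rw [dotProduct_mulVec, ← mulVec_transpose, show Mᵀ = M from hM, dotProduct_comm]

lemma two_isotropic {m : ℕ} (M : Matrix (Fin m) (Fin m) ℂ) (w u : Fin m → ℂ)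
    (hw : w ⬝ᵥ (M *ᵥ w) ≠ 0) : ∃ c : ℂ, (u + c • w) ⬝ᵥ (M *ᵥ (u + c • w)) = 0 := by
  obtain ⟨c, hc⟩ := aux_quad_root (w ⬝ᵥ (M *ᵥ w)) (u ⬝ᵥ (M *ᵥ w) + w ⬝ᵥ (M *ᵥ u))
    (u ⬝ᵥ (M *ᵥ u)) hw
  refine ⟨c, ?_⟩
  simp only [mulVec_add, dotProduct_add, add_dotProduct, mulVec_smul, smul_dotProduct,
    dotProduct_smul, smul_eq_mul]
  linear_combination hc

lemma expand3 {m : ℕ} (M : Matrix (Fin m) (Fin m) ℂ) (i j k : Fin m) (a b c : ℂ) :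
    (Pi.single i a + Pi.single j b + Pi.single k c) ⬝ᵥ
      (M *ᵥ (Pi.single i a + Pi.single j b + Pi.single k c)) =
    M i i * (a*a) + M j j * (b*b) + M k k * (c*c)
      + (M i j + M j i) * (a*b) + (M i k + M k i) * (a*c) + (M j k + M k j) * (b*c) := by
  simp only [mulVec_add, dotProduct_add, add_dotProduct, mulVec_single, single_dotProduct,
    Pi.smul_apply, op_smul_eq_mul, Matrix.col_apply]
  ring

lemma dot_self3 {m : ℕ} {i j k : Fin m} (hij : i ≠ j) (hik : i ≠ k) (hjk : j ≠ k) (a b c : ℂ) :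
    (Pi.single i a + Pi.single j b + Pi.single k c) ⬝ᵥ
      (Pi.single i a + Pi.single j b + Pi.single k c) = a*a + b*b + c*c := by
  have h := expand3 (1 : Matrix (Fin m) (Fin m) ℂ) i j k a b c
  rw [one_mulVec] at h
  rw [h]
  simp only [Matrix.one_apply, if_pos rfl, if_neg hij, if_neg hik, if_neg hjk,
    if_neg hij.symm, if_neg hik.symm, if_neg hjk.symm, if_true]
  ring

lemma dot_diag3 {m : ℕ} (d : Fin m → ℂ) {i j k : Fin m} (hij : i ≠ j) (hik : i ≠ k)
    (hjk : j ≠ k) (a b c : ℂ) :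
    (Pi.single i a + Pi.single j b + Pi.single k c) ⬝ᵥ
      ((Matrix.diagonal d) *ᵥ (Pi.single i a + Pi.single j b + Pi.single k c)) =
      d i * (a*a) + d j * (b*b) + d k * (c*c) := by
  rw [expand3 (Matrix.diagonal d) i j k a b c]
  simp only [Matrix.diagonal_apply, if_pos rfl, if_neg hij, if_neg hik, if_neg hjk,
    if_neg hij.symm, if_neg hik.symm, if_neg hjk.symm, if_true]
  ring

lemma exists_third {m : ℕ} (hm : 3 ≤ m) (i j : Fin m) : ∃ k : Fin m, k ≠ i ∧ k ≠ j := by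
  by_contra h
  push_neg at h
  have hsub : (Finset.univ : Finset (Fin m)) ⊆ {i, j} := by
    intro k _
    rcases eq_or_ne k i with rfl | h'
    · simp
    · simp [h k h']
  have h1 := Finset.card_le_card hsub
  have h2 : ({i, j} : Finset (Fin m)).card ≤ 2 := Finset.card_le_two
  simp [Finset.card_univ] at h1
  omega

/-- For `n ≥ 2`, if the pair of smooth quadrics `{Q_A, Q_B}` has normal
crossings, then every quadric containing the base locus `Q_A ∩ Q_B` lies in the pencil
generated by `Q_A` and `Q_B`: any symmetric `S` with `xᵀSx = 0` whenever `xᵀAx = 0` and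
`xᵀBx = 0` satisfies `S = αA + βB` for some scalars `α`, `β`. -/
theorem quadric_through_base_locus_lies_in_pencil
    (n : ℕ) (hn : 2 ≤ n) (A B : Matrix (Fin (n+1)) (Fin (n+1)) ℂ)
    (hAs : A.IsSymm) (hBs : B.IsSymm) (hA : IsUnit A.det) (hB : IsUnit B.det)
    (hnc : ∀ x : Fin (n+1) → ℂ, x ≠ 0 → x ⬝ᵥ (A *ᵥ x) = 0 → x ⬝ᵥ (B *ᵥ x) = 0 →
      LinearIndependent ℂ ![A *ᵥ x, B *ᵥ x])
    (S : Matrix (Fin (n+1)) (Fin (n+1)) ℂ) (hSs : S.IsSymm)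
    (hS : ∀ x : Fin (n+1) → ℂ, x ⬝ᵥ (A *ᵥ x) = 0 → x ⬝ᵥ (B *ᵥ x) = 0 →
      x ⬝ᵥ (S *ᵥ x) = 0) :
    ∃ α β : ℂ, S = α • A + β • B := by
  -- the endomorphism A⁻¹ * B
  set f : Module.End ℂ (Fin (n+1) → ℂ) := (A⁻¹ * B).mulVecLin with hf
  -- eigen-relation transfer
  have hBA : ∀ (x : Fin (n+1) → ℂ) (μ : ℂ), f x = μ • x → B *ᵥ x = μ • (A *ᵥ x) := by
    intro x μ h
    have h' : (A⁻¹ * B) *ᵥ x = μ • x := by simpa [hf, Matrix.mulVecLin_apply] using h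
    calc B *ᵥ x = (A * (A⁻¹ * B)) *ᵥ x := by
          rw [← Matrix.mul_assoc, Matrix.mul_nonsing_inv A hA, Matrix.one_mul]
      _ = A *ᵥ ((A⁻¹ * B) *ᵥ x) := (mulVec_mulVec x A (A⁻¹ * B)).symm
      _ = A *ᵥ (μ • x) := by rw [h']
      _ = μ • (A *ᵥ x) := mulVec_smul A μ x
  -- degenerate vectors in eigen-directions are zero
  have hdep : ∀ (μ : ℂ) (x : Fin (n+1) → ℂ), B *ᵥ x = μ • (A *ᵥ x) →
      x ⬝ᵥ (A *ᵥ x) = 0 → x = 0 := by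
    intro μ x hBx hqx
    by_contra hx0
    have hqBx : x ⬝ᵥ (B *ᵥ x) = 0 := by
      rw [hBx, dotProduct_smul, hqx, smul_zero]
    have hli := hnc x hx0 hqx hqBx
    rw [linearIndependent_fin2] at hli
    obtain ⟨hne, hnd⟩ := hli
    simp only [Matrix.cons_val_one, Matrix.head_cons, Matrix.cons_val_zero] at hne hnd
    by_cases hμ : μ = 0
    · subst hμ
      rw [hBx, zero_smul] at hne
      exact hne rfl
    · exact hnd μ⁻¹ (by rw [hBx, smul_smul, inv_mul_cancel₀ hμ, one_smul])
  -- no Jordan blocks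
  have hker2 : ∀ (μ : ℂ) (y : Fin (n+1) → ℂ),
      (f - μ • 1) ((f - μ • 1) y) = 0 → (f - μ • 1) y = 0 := by
    intro μ y h
    set x := (f - μ • 1) y with hxdef
    have hfx : f x = μ • x := by
      have h' : f x - μ • x = 0 := by
        simpa [LinearMap.sub_apply, LinearMap.smul_apply, Module.End.one_apply] using h
      exact sub_eq_zero.mp h'
    have hBx : B *ᵥ x = μ • (A *ᵥ x) := hBA x μ hfx
    have hxval : x = (A⁻¹ * B) *ᵥ y - μ • y := by
      simp [hxdef, LinearMap.sub_apply, LinearMap.smul_apply, Module.End.one_apply, hf,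
        Matrix.mulVecLin_apply]
    have hAx : A *ᵥ x = B *ᵥ y - μ • (A *ᵥ y) := by
      rw [hxval]
      have : A *ᵥ ((A⁻¹ * B) *ᵥ y) = B *ᵥ y := by
        rw [mulVec_mulVec, ← Matrix.mul_assoc, Matrix.mul_nonsing_inv A hA, Matrix.one_mul]
      rw [mulVec_sub, this, mulVec_smul]
    have hqx : x ⬝ᵥ (A *ᵥ x) = 0 := by
      have h1 : x ⬝ᵥ (B *ᵥ y) = μ * (x ⬝ᵥ (A *ᵥ y)) := by
        rw [symm_dot B hBs x y, hBx, dotProduct_smul, smul_eq_mul, symm_dot A hAs y x]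
      rw [hAx, dotProduct_sub, dotProduct_smul, h1, smul_eq_mul, sub_self]
    have := hdep μ x hBx hqx
    rwa [hxdef] at this ⊢
  -- generalized eigenspaces are eigenspaces
  have hgen : ∀ μ : ℂ, f.maxGenEigenspace μ ≤ f.eigenspace μ := by
    intro μ y hy
    rw [Module.End.mem_maxGenEigenspace] at hy
    obtain ⟨k, hk⟩ := hy
    rw [Module.End.mem_eigenspace_iff]
    have hind : ∀ (k : ℕ) (y : Fin (n+1) → ℂ), ((f - μ • 1) ^ k) y = 0 → (f - μ • 1) y = 0 := by
      intro k
      induction k with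
      | zero => intro y hy; rw [pow_zero, Module.End.one_apply] at hy; rw [hy]; simp
      | succ k ih =>
        intro y hy
        rw [pow_succ, Module.End.mul_apply] at hy
        exact hker2 μ y (ih _ hy)
    have := hind k y hk
    have h2 : f y - μ • y = 0 := by
      simpa [LinearMap.sub_apply, LinearMap.smul_apply, Module.End.one_apply] using this
    exact sub_eq_zero.mp h2
  -- eigenvalues form a finite set of size at least n+1
  have hmp : minpoly ℂ f ≠ 0 := minpoly.ne_zero (Module.End.isIntegral.isIntegral f)
  have hfin : {μ : ℂ | f.HasEigenvalue μ}.Finite := by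
    apply Set.Finite.subset (Polynomial.finite_setOf_isRoot hmp)
    intro μ hμ
    exact Module.End.hasEigenvalue_iff_isRoot.mp hμ
  set E : Finset ℂ := hfin.toFinset with hE
  -- choice of eigenvectors
  have hWex : ∀ μ : ℂ, ∃ z : Fin (n+1) → ℂ, f.HasEigenvalue μ → (f z = μ • z ∧ z ≠ 0) := by
    intro μ
    by_cases h : f.HasEigenvalue μ
    · obtain ⟨z, hz⟩ := h.exists_hasEigenvector
      exact ⟨z, fun _ => ⟨Module.End.mem_eigenspace_iff.mp hz.1, hz.2⟩⟩
    · exact ⟨0, fun h' => absurd h' h⟩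
  choose w' hw' using hWex
  have hqA : ∀ μ : ℂ, f.HasEigenvalue μ → w' μ ⬝ᵥ (A *ᵥ w' μ) ≠ 0 := by
    intro μ h hq0
    obtain ⟨hfe, hne⟩ := hw' μ h
    exact hne (hdep μ _ (hBA _ _ hfe) hq0)
  have hspan : ∀ μ : ℂ, f.eigenspace μ ≤ Submodule.span ℂ {w' μ} := by
    intro μ u hu
    by_cases h : f.HasEigenvalue μ
    · obtain ⟨hfe, hne⟩ := hw' μ h
      obtain ⟨c, hc⟩ := two_isotropic A (w' μ) u (hqA μ h)
      have hz : f (u + c • w' μ) = μ • (u + c • w' μ) := by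
        have hu' := Module.End.mem_eigenspace_iff.mp hu
        rw [map_add, _root_.map_smul, hu', hfe, smul_add, smul_smul, smul_smul, mul_comm]
      have h0 := hdep μ _ (hBA _ _ hz) hc
      rw [Submodule.mem_span_singleton]
      refine ⟨-c, ?_⟩
      have := eq_neg_of_add_eq_zero_left h0
      rw [neg_smul, ← this]
    · have hbot : f.eigenspace μ = ⊥ := not_not.mp (fun h' => h h')
      rw [hbot] at hu
      simp only [Submodule.mem_bot] at hu
      rw [hu]
      exact Submodule.zero_mem _
  have htop : (⊤ : Submodule ℂ (Fin (n+1) → ℂ)) ≤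
      Submodule.span ℂ ((E.image w' : Finset (Fin (n+1) → ℂ)) : Set (Fin (n+1) → ℂ)) := by
    rw [← Module.End.iSup_maxGenEigenspace_eq_top f]
    apply iSup_le
    intro μ
    by_cases h : f.HasEigenvalue μ
    · refine le_trans (le_trans (hgen μ) (hspan μ)) (Submodule.span_mono ?_)
      intro z hz
      rw [Set.mem_singleton_iff] at hz
      rw [hz]
      simp only [Finset.coe_image, Set.mem_image, Finset.mem_coe]
      exact ⟨μ, by rw [hE]; exact (Set.Finite.mem_toFinset hfin).mpr h, rfl⟩
    · have hbot : f.eigenspace μ = ⊥ := not_not.mp (fun h' => h h')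
      refine le_trans (hgen μ) ?_
      rw [hbot]
      exact bot_le
  have hcard : n + 1 ≤ E.card := by
    have h1 : Submodule.span ℂ ((E.image w' : Finset (Fin (n+1) → ℂ)) : Set (Fin (n+1) → ℂ))
        = ⊤ := le_antisymm le_top htop
    have h2 := finrank_span_finset_le_card (R := ℂ) (E.image w')
    rw [Set.finrank, h1] at h2
    have h3 : finrank ℂ (⊤ : Submodule ℂ (Fin (n+1) → ℂ)) = n + 1 := by
      rw [finrank_top, Module.finrank_pi, Fintype.card_fin]
    have h4 := Finset.card_image_le (s := E) (f := w')
    omega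
  obtain ⟨t, htE, htcard⟩ := Finset.exists_subset_card_eq hcard
  set e := Finset.equivFinOfCardEq htcard with he
  set L : Fin (n+1) → ℂ := fun i => ((e.symm i : t) : ℂ) with hL
  have hLinj : Function.Injective L := by
    intro i j hij
    have := Subtype.coe_injective hij
    exact e.symm.injective this
  have hLev : ∀ i : Fin (n+1), f.HasEigenvalue (L i) := by
    intro i
    have hmem : (L i) ∈ t := (e.symm i).2
    have := htE hmem
    rw [hE, Set.Finite.mem_toFinset hfin] at this
    exact this
  set w : Fin (n+1) → (Fin (n+1) → ℂ) := fun i => w' (L i) with hwdef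
  have hwf : ∀ i, f (w i) = L i • w i := fun i => (hw' _ (hLev i)).1
  have hwA : ∀ i, w i ⬝ᵥ (A *ᵥ w i) ≠ 0 := fun i => hqA _ (hLev i)
  have hwB : ∀ i, B *ᵥ w i = L i • (A *ᵥ w i) := fun i => hBA _ _ (hwf i)
  -- A-orthogonality of eigenvectors
  have horth : ∀ i j : Fin (n+1), i ≠ j → w i ⬝ᵥ (A *ᵥ w j) = 0 := by
    intro i j hij
    have h1 : w i ⬝ᵥ (B *ᵥ w j) = L j * (w i ⬝ᵥ (A *ᵥ w j)) := by
      rw [hwB j, dotProduct_smul, smul_eq_mul]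
    have h2 : w i ⬝ᵥ (B *ᵥ w j) = L i * (w i ⬝ᵥ (A *ᵥ w j)) := by
      rw [symm_dot B hBs, hwB i, dotProduct_smul, smul_eq_mul, symm_dot A hAs]
    have h3 : (L j - L i) * (w i ⬝ᵥ (A *ᵥ w j)) = 0 := by linear_combination h2 - h1
    have h4 : L j - L i ≠ 0 := sub_ne_zero.mpr (fun hc => hij (hLinj hc).symm)
    exact (mul_eq_zero.mp h3).resolve_left h4
  -- normalization
  have hcex : ∀ i : Fin (n+1), ∃ c : ℂ, c ^ 2 = (w i ⬝ᵥ (A *ᵥ w i))⁻¹ :=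
    fun i => IsAlgClosed.exists_pow_nat_eq _ two_pos
  choose c hc using hcex
  have hcne : ∀ i, c i ≠ 0 := by
    intro i hc0
    have := hc i
    rw [hc0] at this
    simp only [ne_eq, zero_pow, OfNat.ofNat_ne_zero, not_false_eq_true] at this
    exact inv_ne_zero (hwA i) this.symm
  set v : Fin (n+1) → (Fin (n+1) → ℂ) := fun i => c i • w i with hvdef
  have hvA : ∀ i j, v i ⬝ᵥ (A *ᵥ v j) = if i = j then 1 else 0 := by
    intro i j
    have hexp : v i ⬝ᵥ (A *ᵥ v j) = c i * c j * (w i ⬝ᵥ (A *ᵥ w j)) := by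
      rw [hvdef]
      simp only [mulVec_smul, smul_dotProduct, dotProduct_smul, smul_eq_mul]
      ring
    by_cases hij : i = j
    · subst hij
      rw [hexp, if_pos rfl, ← sq, hc i, inv_mul_cancel₀ (hwA i)]
    · rw [hexp, if_neg hij, horth i j hij, mul_zero]
  have hvB : ∀ i j, v i ⬝ᵥ (B *ᵥ v j) = if i = j then L i else 0 := by
    intro i j
    have hBv : B *ᵥ v j = L j • (A *ᵥ v j) := by
      rw [hvdef]
      simp only [mulVec_smul, hwB j]
      rw [smul_comm]
    rw [hBv, dotProduct_smul, smul_eq_mul, hvA i j]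
    by_cases hij : i = j
    · subst hij; simp
    · simp [hij]
  -- the change-of-basis matrix
  set P : Matrix (Fin (n+1)) (Fin (n+1)) ℂ := Matrix.of (fun k i => v i k) with hP
  have hent : ∀ (M : Matrix (Fin (n+1)) (Fin (n+1)) ℂ) (i j : Fin (n+1)),
      (Pᵀ * M * P) i j = v i ⬝ᵥ (M *ᵥ v j) := by
    intro M i j
    simp only [Matrix.mul_apply, Matrix.transpose_apply, dotProduct, Matrix.mulVec,
      Matrix.of_apply, hP, Finset.sum_mul, Finset.mul_sum]
    rw [Finset.sum_comm]
    apply Finset.sum_congr rfl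
    intro l _
    apply Finset.sum_congr rfl
    intro k _
    ring
  have hPA : Pᵀ * A * P = 1 := by
    ext i j
    rw [hent A i j, hvA i j, Matrix.one_apply]
  have hPB : Pᵀ * B * P = Matrix.diagonal L := by
    ext i j
    rw [hent B i j, hvB i j, Matrix.diagonal_apply]
  have hdetP : IsUnit P.det := by
    have hdet := congrArg Matrix.det hPA
    rw [Matrix.det_mul, Matrix.det_mul, Matrix.det_transpose, Matrix.det_one] at hdet
    exact IsUnit.of_mul_eq_one (A.det * P.det) (by linear_combination hdet)
  -- transfer of the quadratic conditions
  have hx : ∀ (M : Matrix (Fin (n+1)) (Fin (n+1)) ℂ) (y : Fin (n+1) → ℂ),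
      (P *ᵥ y) ⬝ᵥ (M *ᵥ (P *ᵥ y)) = y ⬝ᵥ ((Pᵀ * M * P) *ᵥ y) := by
    intro M y
    calc (P *ᵥ y) ⬝ᵥ (M *ᵥ (P *ᵥ y)) = (P *ᵥ y) ⬝ᵥ ((M * P) *ᵥ y) := by rw [mulVec_mulVec]
      _ = ((M * P) *ᵥ y) ⬝ᵥ (P *ᵥ y) := dotProduct_comm _ _
      _ = (((M * P) *ᵥ y) ᵥ* P) ⬝ᵥ y := dotProduct_mulVec _ _ _
      _ = (Pᵀ *ᵥ ((M * P) *ᵥ y)) ⬝ᵥ y := by rw [mulVec_transpose]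
      _ = ((Pᵀ * (M * P)) *ᵥ y) ⬝ᵥ y := by rw [mulVec_mulVec]
      _ = y ⬝ᵥ ((Pᵀ * M * P) *ᵥ y) := by rw [dotProduct_comm, Matrix.mul_assoc]
  set T : Matrix (Fin (n+1)) (Fin (n+1)) ℂ := Pᵀ * S * P with hTdef
  have hTs : ∀ i j : Fin (n+1), T j i = T i j := by
    intro i j
    rw [hTdef, hent S j i, hent S i j, symm_dot S hSs]
  have hq : ∀ y : Fin (n+1) → ℂ, y ⬝ᵥ y = 0 → y ⬝ᵥ ((Matrix.diagonal L) *ᵥ y) = 0 →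
      y ⬝ᵥ (T *ᵥ y) = 0 := by
    intro y h1 h2
    rw [hTdef, ← hx S y]
    apply hS
    · rw [hx A y, hPA, one_mulVec]; exact h1
    · rw [hx B y, hPB]; exact h2
  -- the key evaluation on three coordinates
  have key : ∀ i j k : Fin (n+1), i ≠ j → i ≠ k → j ≠ k →
      T i j = 0 ∧ T i i * (L j - L k) + T j j * (L k - L i) + T k k * (L i - L j) = 0 := by
    intro i j k hij hik hjk
    obtain ⟨a, ha⟩ := IsAlgClosed.exists_pow_nat_eq (k := ℂ) (L j - L k) two_pos
    obtain ⟨b, hb⟩ := IsAlgClosed.exists_pow_nat_eq (k := ℂ) (L k - L i) two_pos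
    obtain ⟨c, hc⟩ := IsAlgClosed.exists_pow_nat_eq (k := ℂ) (L i - L j) two_pos
    have ha2 : a * a = L j - L k := by linear_combination ha
    have hb2 : b * b = L k - L i := by linear_combination hb
    have hc2 : c * c = L i - L j := by linear_combination hc
    have hane : a ≠ 0 := by
      intro h0
      rw [h0, mul_zero] at ha2
      exact sub_ne_zero.mpr (fun hcc => hjk (hLinj hcc)) ha2.symm
    have hbne : b ≠ 0 := by
      intro h0
      rw [h0, mul_zero] at hb2
      exact sub_ne_zero.mpr (fun hcc => hik (hLinj hcc).symm) hb2.symm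
    have hcne2 : c ≠ 0 := by
      intro h0
      rw [h0, mul_zero] at hc2
      exact sub_ne_zero.mpr (fun hcc => hij (hLinj hcc)) hc2.symm
    have happ : ∀ a' b' c' : ℂ, a' * a' + b' * b' + c' * c' = 0 →
        L i * (a' * a') + L j * (b' * b') + L k * (c' * c') = 0 →
        T i i * (a'*a') + T j j * (b'*b') + T k k * (c'*c')
          + (T i j + T j i) * (a'*b') + (T i k + T k i) * (a'*c')
          + (T j k + T k j) * (b'*c') = 0 := by
      intro a' b' c' h1 h2
      have h0 := hq (Pi.single i a' + Pi.single j b' + Pi.single k c')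
        (by rw [dot_self3 hij hik hjk]; exact h1)
        (by rw [dot_diag3 L hij hik hjk]; exact h2)
      rw [expand3 T i j k a' b' c'] at h0
      exact h0
    have hsum : a * a + b * b + c * c = 0 := by linear_combination ha2 + hb2 + hc2
    have hwsum : L i * (a*a) + L j * (b*b) + L k * (c*c) = 0 := by
      linear_combination L i * ha2 + L j * hb2 + L k * hc2
    have h1 := happ a b c hsum hwsum
    have h2 := happ (-a) b c (by linear_combination hsum) (by linear_combination hwsum)
    have h3 := happ a (-b) c (by linear_combination hsum) (by linear_combination hwsum)
    have h4 := happ a b (-c) (by linear_combination hsum) (by linear_combination hwsum)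
    have hX : (T i j + T j i) * (a * b) = 0 := by linear_combination (h1 - h2 - h3 + h4) / 4
    have hD : T i i * (a*a) + T j j * (b*b) + T k k * (c*c) = 0 := by
      linear_combination (h1 + h2 + h3 + h4) / 4
    constructor
    · have hTij : T i j * (a * b) = 0 := by
        linear_combination hX / 2 - (a * b / 2) * hTs i j
      exact (mul_eq_zero.mp hTij).resolve_right (mul_ne_zero hane hbne)
    · linear_combination hD - T i i * ha2 - T j j * hb2 - T k k * hc2
  -- off-diagonal entries vanish
  have hoff : ∀ p q : Fin (n+1), p ≠ q → T p q = 0 := by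
    intro p q hpq
    obtain ⟨k, hkp, hkq⟩ := exists_third (by omega : 3 ≤ n + 1) p q
    exact (key p q k hpq (Ne.symm hkp) (Ne.symm hkq)).1
  -- diagonal entries are affine in L
  have h01 : (0 : Fin (n+1)) ≠ 1 := by
    have hv : (1 : Fin (n+1)).val = 1 := by rw [Fin.val_one', Nat.mod_eq_of_lt (by omega)]
    exact Fin.ne_of_val_ne (by rw [Fin.val_zero, hv]; omega)
  have hL01 : L 0 - L 1 ≠ 0 := sub_ne_zero.mpr (fun hcc => h01 (hLinj hcc))
  set β : ℂ := (T 0 0 - T 1 1) / (L 0 - L 1) with hβ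
  set α : ℂ := T 0 0 - β * L 0 with hα
  have hdiag : ∀ p : Fin (n+1), T p p = α + β * L p := by
    intro p
    by_cases hp0 : p = 0
    · subst hp0; rw [hα]; ring
    · by_cases hp1 : p = 1
      · subst hp1
        rw [hα, hβ]
        field_simp
        ring
      · have hrel := (key 0 1 p h01 (Ne.symm hp0) (Ne.symm hp1)).2
        rw [hα, hβ]
        field_simp
        linear_combination hrel
  have hTmat : T = α • (1 : Matrix (Fin (n+1)) (Fin (n+1)) ℂ) + β • Matrix.diagonal L := by
    ext p q
    by_cases h : p = q
    · subst h
      simp only [Matrix.add_apply, Matrix.smul_apply, Matrix.one_apply_eq,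
        Matrix.diagonal_apply_eq, smul_eq_mul]
      rw [hdiag p]
      ring
    · simp only [Matrix.add_apply, Matrix.smul_apply, Matrix.one_apply_ne h,
        Matrix.diagonal_apply_ne _ h, smul_eq_mul, mul_zero, add_zero]
      exact hoff p q h
  -- conclusion
  refine ⟨α, β, ?_⟩
  have hfinal : Pᵀ * S * P = Pᵀ * (α • A + β • B) * P := by
    calc Pᵀ * S * P = α • (1 : Matrix (Fin (n+1)) (Fin (n+1)) ℂ) + β • Matrix.diagonal L := by
          rw [← hTdef]; exact hTmat
      _ = α • (Pᵀ * A * P) + β • (Pᵀ * B * P) := by rw [hPA, hPB]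
      _ = Pᵀ * (α • A + β • B) * P := by
          simp only [Matrix.mul_add, Matrix.add_mul, Matrix.mul_smul, Matrix.smul_mul]
  have hPtdet : IsUnit Pᵀ.det := by rwa [Matrix.det_transpose]
  have hcan : ∀ X : Matrix (Fin (n+1)) (Fin (n+1)) ℂ, (Pᵀ)⁻¹ * (Pᵀ * X * P) * P⁻¹ = X := by
    intro X
    calc (Pᵀ)⁻¹ * (Pᵀ * X * P) * P⁻¹ = (Pᵀ)⁻¹ * (Pᵀ * (X * (P * P⁻¹))) := by
          simp only [Matrix.mul_assoc]
      _ = X := by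
          rw [Matrix.mul_nonsing_inv _ hdetP, Matrix.mul_one, ← Matrix.mul_assoc,
            Matrix.nonsing_inv_mul _ hPtdet, Matrix.one_mul]
  calc S = (Pᵀ)⁻¹ * (Pᵀ * S * P) * P⁻¹ := (hcan S).symm
    _ = (Pᵀ)⁻¹ * (Pᵀ * (α • A + β • B) * P) * P⁻¹ := by rw [hfinal]
    _ = α • A + β • B := hcan _
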